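/- Let p be a prime, ν a natural number and m an integer. Let N be the number of quadruples (x₁,y₁,x₂,y₂) ∈ (ℤ/p^νℤ)⁴ with x₁·y₁ + x₂·y₂ = m (mod p^ν). If m ≠ 0 and v_p(m) < ν, where v_p(m) denotes the p-adic valuation of m, then N = p^{3ν}·(1+p^{−1})·(1−p^{−v_p(m)−1}). If m = 0 or v_p(m) ≥ ν, then N = p^{3ν}·(1 + p^{−1} − p^{−ν−1}). (Both equalities are equalities of rational numbers.) -/

import Mathlib

open Finset

namespace RepNumAux

def sols (n : ℕ) [NeZero n] (m : ℤ) : Finset (ZMod n × ZMod n × ZMod n × ZMod n) :=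
  univ.filter (fun v => v.1 * v.2.1 + v.2.2.1 * v.2.2.2 = (m : ZMod n))

lemma natCard_eq_sols (n : ℕ) [NeZero n] (m : ℤ) :
    Nat.card {v : ZMod n × ZMod n × ZMod n × ZMod n //
        v.1 * v.2.1 + v.2.2.1 * v.2.2.2 = (m : ZMod n)} = (sols n m).card := by
  rw [Nat.card_eq_fintype_card, Fintype.card_subtype]
  congr 1

lemma sols_one (m : ℤ) : (sols 1 m).card = 1 := by
  have h : sols 1 m = univ := by
    apply Finset.filter_true_of_mem
    intro v _
    exact Subsingleton.elim _ _
  rw [h, card_univ]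
  simp

-- count of y,w with x*y+z*w=c when x or z is a unit
lemma card_lin (n : ℕ) [NeZero n] (x z c : ZMod n) (hx : IsUnit x ∨ IsUnit z) :
    (univ.filter (fun yw : ZMod n × ZMod n => x * yw.1 + z * yw.2 = c)).card = n := by
  have key : ∀ x z : ZMod n, IsUnit x →
      (univ.filter (fun yw : ZMod n × ZMod n => x * yw.1 + z * yw.2 = c)).card = n := by
    intro x z hx
    have : (univ.filter (fun yw : ZMod n × ZMod n => x * yw.1 + z * yw.2 = c)).card
        = (univ : Finset (ZMod n)).card := by
      apply Finset.card_nbij' (fun yw => yw.2) (fun w => ((hx.unit⁻¹ : (ZMod n)ˣ) * (c - z * w), w))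
      · intro a _; simp
      · intro w _
        simp only [Finset.mem_coe, mem_filter, mem_univ, true_and]
        have h1 : (x * (hx.unit⁻¹ : (ZMod n)ˣ)) = 1 := hx.mul_val_inv
        calc x * ((hx.unit⁻¹ : (ZMod n)ˣ) * (c - z * w)) + z * w
            = (x * (hx.unit⁻¹ : (ZMod n)ˣ)) * (c - z * w) + z * w := by ring
          _ = c := by rw [h1]; ring
      · intro a ha
        simp only [Finset.mem_coe, mem_filter, mem_univ, true_and] at ha
        have h2 : ((hx.unit⁻¹ : (ZMod n)ˣ) * x) = 1 := hx.val_inv_mul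
        have h1 : (hx.unit⁻¹ : (ZMod n)ˣ) * (x * a.1) = a.1 := by
          rw [← mul_assoc, h2, one_mul]
        have h3 : x * a.1 = c - z * a.2 := by rw [← ha]; ring
        rw [h3] at h1
        exact Prod.ext h1 rfl
      · intro w _; rfl
    rw [this, card_univ, ZMod.card]
  rcases hx with hx | hz
  · exact key x z hx
  · have swap : (univ.filter (fun yw : ZMod n × ZMod n => x * yw.1 + z * yw.2 = c)).card
        = (univ.filter (fun yw : ZMod n × ZMod n => z * yw.1 + x * yw.2 = c)).card := by
      apply Finset.card_nbij' (fun yw => (yw.2, yw.1)) (fun yw => (yw.2, yw.1))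
      · intro a ha; simp only [Finset.mem_coe, mem_filter, mem_univ, true_and] at ha ⊢; rw [← ha]; ring
      · intro a ha; simp only [Finset.mem_coe, mem_filter, mem_univ, true_and] at ha ⊢; rw [← ha]; ring
      · intro a _; rfl
      · intro a _; rfl
    rw [swap]; exact key z x hz

end RepNumAux

namespace RepNumAux
open Finset

lemma isUnit_iff_not_dvd_val {p : ℕ} (hp : p.Prime) (k : ℕ) (x : ZMod (p ^ (k + 1))) :
    IsUnit x ↔ ¬ p ∣ x.val := by
  haveI : NeZero (p ^ (k + 1)) := ⟨pow_ne_zero _ hp.ne_zero⟩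
  have hx : ((x.val : ℕ) : ZMod (p ^ (k + 1))) = x := ZMod.natCast_rightInverse x
  rw [← hx, ZMod.isUnit_iff_coprime, ZMod.val_natCast, Nat.mod_eq_of_lt x.val_lt,
    Nat.coprime_pow_right_iff (Nat.succ_pos k), Nat.coprime_comm]
  exact hp.coprime_iff_not_dvd

lemma card_pdvd {p : ℕ} (hp : p.Prime) (k : ℕ) :
    letI : NeZero (p ^ (k + 1)) := ⟨pow_ne_zero _ hp.ne_zero⟩
    (univ.filter (fun x : ZMod (p ^ (k + 1)) => p ∣ x.val)).card = p ^ k := by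
  haveI : NeZero (p ^ (k + 1)) := ⟨pow_ne_zero _ hp.ne_zero⟩
  have : (univ.filter (fun x : ZMod (p ^ (k + 1)) => p ∣ x.val)).card
      = (range (p ^ k)).card := by
    apply Finset.card_nbij' (fun x => x.val / p) (fun i => ((p * i : ℕ) : ZMod (p ^ (k + 1))))
    · intro x hx
      simp only [Finset.mem_coe, mem_filter, mem_univ, true_and] at hx
      simp only [Finset.mem_coe, mem_range]
      exact Nat.div_lt_of_lt_mul (by rw [← pow_succ'] ; exact x.val_lt)
    · intro i hi
      simp only [Finset.mem_coe, mem_range] at hi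
      simp only [Finset.mem_coe, mem_filter, mem_univ, true_and]
      rw [ZMod.val_natCast, Nat.mod_eq_of_lt]
      · exact Dvd.intro i rfl
      · calc p * i < p * p ^ k := (Nat.mul_lt_mul_left hp.pos).mpr hi
          _ = p ^ (k + 1) := (pow_succ' p k).symm
    · intro x hx
      simp only [Finset.mem_coe, mem_filter, mem_univ, true_and] at hx
      dsimp only
      rw [Nat.mul_div_cancel' hx]
      exact ZMod.natCast_rightInverse x
    · intro i hi
      simp only [Finset.mem_coe, mem_range] at hi
      dsimp only
      rw [ZMod.val_natCast, Nat.mod_eq_of_lt, Nat.mul_div_cancel_left _ hp.pos]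
      calc p * i < p * p ^ k := (Nat.mul_lt_mul_left hp.pos).mpr hi
        _ = p ^ (k + 1) := (pow_succ' p k).symm
  rw [this, card_range]

end RepNumAux

namespace RepNumAux
open Finset

lemma card_unit_part {p : ℕ} (hp : p.Prime) (k : ℕ) (m : ℤ) :
    letI : NeZero (p ^ (k + 1)) := ⟨pow_ne_zero _ hp.ne_zero⟩
    ((sols (p ^ (k + 1)) m).filter
        (fun v => ¬(p ∣ v.1.val ∧ p ∣ v.2.2.1.val))).card
      = (p ^ (2 * (k + 1)) - p ^ (2 * k)) * p ^ (k + 1) := by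
  haveI : NeZero (p ^ (k + 1)) := ⟨pow_ne_zero _ hp.ne_zero⟩
  set n := p ^ (k + 1) with hn
  classical
  set T : Finset (ZMod n × ZMod n) :=
    univ.filter (fun xz => ¬(p ∣ xz.1.val ∧ p ∣ xz.2.val)) with hT
  set S := (sols n m).filter (fun v => ¬(p ∣ v.1.val ∧ p ∣ v.2.2.1.val)) with hS
  have hmap : ∀ v ∈ S, (v.1, v.2.2.1) ∈ T := by
    intro v hv
    simp only [hS, mem_filter] at hv
    simp only [hT, mem_filter, mem_univ, true_and]
    exact hv.2
  rw [Finset.card_eq_sum_card_fiberwise hmap]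
  have hfib : ∀ xz ∈ T, (S.filter (fun v => (v.1, v.2.2.1) = xz)).card = n := by
    intro xz hxz
    simp only [hT, mem_filter, mem_univ, true_and] at hxz
    have hunit : IsUnit xz.1 ∨ IsUnit xz.2 := by
      by_cases h1 : p ∣ xz.1.val
      · right
        rw [isUnit_iff_not_dvd_val hp]
        intro h2
        exact hxz ⟨h1, h2⟩
      · left
        rw [isUnit_iff_not_dvd_val hp]
        exact h1
    refine Eq.trans ?_ (card_lin n xz.1 xz.2 (m : ZMod n) hunit)
    apply Finset.card_nbij' (fun v => (v.2.1, v.2.2.2))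
      (fun yw => (xz.1, yw.1, xz.2, yw.2))
    · intro v hv
      simp only [Finset.mem_coe, hS, mem_filter, sols, mem_univ, true_and] at hv
      obtain ⟨⟨heq, _⟩, hv2⟩ := hv
      simp only [Finset.mem_coe, mem_filter, mem_univ, true_and]
      rw [← hv2]
      exact heq
    · intro yw hyw
      simp only [Finset.mem_coe, mem_filter, mem_univ, true_and] at hyw
      simp only [Finset.mem_coe, hS, mem_filter, sols, mem_univ, true_and]
      exact ⟨⟨hyw, by simpa using hxz⟩, trivial⟩
    · intro v hv
      simp only [Finset.mem_coe, hS, mem_filter] at hv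
      obtain ⟨_, hv2⟩ := hv
      rw [← hv2]
    · intro yw _
      rfl
  rw [Finset.sum_congr rfl hfib, Finset.sum_const, smul_eq_mul]
  congr 1
  -- T.card = p ^ (2*(k+1)) - p ^ (2*k)
  have h1 : T = (univ : Finset (ZMod n × ZMod n)) \
      (univ.filter (fun xz : ZMod n × ZMod n => p ∣ xz.1.val ∧ p ∣ xz.2.val)) := by
    rw [hT, Finset.filter_not]
  have h2 : (univ.filter (fun xz : ZMod n × ZMod n => p ∣ xz.1.val ∧ p ∣ xz.2.val)).card
      = p ^ k * p ^ k := by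
    have heq : (univ.filter (fun xz : ZMod n × ZMod n => p ∣ xz.1.val ∧ p ∣ xz.2.val))
        = (univ.filter (fun x : ZMod n => p ∣ x.val)) ×ˢ
          (univ.filter (fun x : ZMod n => p ∣ x.val)) := by
      ext xz
      simp [Finset.mem_product]
    rw [heq, Finset.card_product, card_pdvd hp]
  have e1 : n * n = p ^ (2 * (k + 1)) := by rw [hn, ← pow_add]; congr 1; ring
  have e2 : p ^ k * p ^ k = p ^ (2 * k) := by rw [← pow_add]; congr 1; ring
  rw [h1, Finset.card_sdiff_of_subset (Finset.filter_subset _ _), h2]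
  rw [Finset.card_univ, Fintype.card_prod, ZMod.card, e1, e2]

end RepNumAux

namespace RepNumAux
open Finset

lemma nonunit_empty {p : ℕ} (hp : p.Prime) (k : ℕ) (m : ℤ) (hm : ¬ (p : ℤ) ∣ m) :
    letI : NeZero (p ^ (k + 1)) := ⟨pow_ne_zero _ hp.ne_zero⟩
    ((sols (p ^ (k + 1)) m).filter (fun v => p ∣ v.1.val ∧ p ∣ v.2.2.1.val)) = ∅ := by
  haveI : NeZero (p ^ (k + 1)) := ⟨pow_ne_zero _ hp.ne_zero⟩
  rw [Finset.eq_empty_iff_forall_notMem]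
  intro v hv
  simp only [mem_filter, sols, mem_univ, true_and] at hv
  obtain ⟨heq, hx, hz⟩ := hv
  apply hm
  rw [← ZMod.intCast_zmod_eq_zero_iff_dvd]
  have hhom := congrArg (ZMod.castHom (dvd_pow_self p (Nat.succ_ne_zero k)) (ZMod p)) heq
  rw [map_intCast] at hhom
  rw [← hhom, map_add, map_mul, map_mul]
  have h1 : (ZMod.castHom (dvd_pow_self p (Nat.succ_ne_zero k)) (ZMod p)) v.1 = 0 := by
    rw [← ZMod.natCast_rightInverse v.1, map_natCast, ZMod.natCast_eq_zero_iff]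
    exact hx
  have h2 : (ZMod.castHom (dvd_pow_self p (Nat.succ_ne_zero k)) (ZMod p)) v.2.2.1 = 0 := by
    rw [← ZMod.natCast_rightInverse v.2.2.1, map_natCast, ZMod.natCast_eq_zero_iff]
    exact hz
  rw [h1, h2, zero_mul, zero_mul, add_zero]

end RepNumAux

namespace RepNumAux
open Finset

section Bij
variable {p : ℕ} (k : ℕ)

lemma lift_eq {a b : ℤ} (h : (a : ZMod (p ^ k)) = (b : ZMod (p ^ k))) :
    ((p * a : ℤ) : ZMod (p ^ (k + 1))) = ((p * b : ℤ) : ZMod (p ^ (k + 1))) := by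
  rw [ZMod.intCast_eq_intCast_iff, Int.modEq_iff_dvd] at h ⊢
  push_cast at h ⊢
  have : (p : ℤ) * b - p * a = p * (b - a) := by ring
  rw [this, pow_succ, mul_comm ((p:ℤ)^k) (p:ℤ)]
  exact mul_dvd_mul_left _ h

lemma unlift_eq (hp : p.Prime) {a b : ℤ}
    (h : ((p * a : ℤ) : ZMod (p ^ (k + 1))) = ((p * b : ℤ) : ZMod (p ^ (k + 1)))) :
    (a : ZMod (p ^ k)) = (b : ZMod (p ^ k)) := by
  have hp0 : (p : ℤ) ≠ 0 := by exact_mod_cast hp.ne_zero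
  rw [ZMod.intCast_eq_intCast_iff, Int.modEq_iff_dvd] at h ⊢
  push_cast at h ⊢
  rw [pow_succ, mul_comm ((p:ℤ)^k) (p:ℤ), show (p:ℤ) * b - p * a = p * (b - a) by ring,
    mul_dvd_mul_iff_left hp0] at h
  exact h

end Bij

end RepNumAux

namespace RepNumAux
open Finset

lemma card_nonunit_part {p : ℕ} (hp : p.Prime) (k : ℕ) (m₀ : ℤ) :
    letI : NeZero (p ^ (k + 1)) := ⟨pow_ne_zero _ hp.ne_zero⟩
    letI : NeZero (p ^ k) := ⟨pow_ne_zero _ hp.ne_zero⟩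
    ((sols (p ^ (k + 1)) ((p : ℤ) * m₀)).filter
        (fun v => p ∣ v.1.val ∧ p ∣ v.2.2.1.val)).card
      = p ^ 2 * (sols (p ^ k) m₀).card := by
  haveI : NeZero (p ^ (k + 1)) := ⟨pow_ne_zero _ hp.ne_zero⟩
  haveI : NeZero (p ^ k) := ⟨pow_ne_zero _ hp.ne_zero⟩
  haveI : NeZero p := ⟨hp.ne_zero⟩
  classical
  -- bounds
  have hlt1 : ∀ u : ZMod (p ^ k), p * u.val < p ^ (k + 1) := by
    intro u
    rw [pow_succ']
    exact (Nat.mul_lt_mul_left hp.pos).mpr u.val_lt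
  have hval1 : ∀ u : ZMod (p ^ k), ((p * u.val : ℕ) : ZMod (p ^ (k + 1))).val = p * u.val :=
    fun u => ZMod.val_natCast_of_lt (hlt1 u)
  have hlt2 : ∀ (u : ZMod (p ^ k)) (a : ZMod p), u.val + p ^ k * a.val < p ^ (k + 1) := by
    intro u a
    have h1 : u.val < p ^ k := u.val_lt
    have h2 : a.val + 1 ≤ p := a.val_lt
    calc u.val + p ^ k * a.val < p ^ k + p ^ k * a.val := by omega
      _ = p ^ k * (a.val + 1) := by ring
      _ ≤ p ^ k * p := Nat.mul_le_mul_left _ h2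
      _ = p ^ (k + 1) := (pow_succ p k).symm
  have hval2 : ∀ (u : ZMod (p ^ k)) (a : ZMod p),
      ((u.val + p ^ k * a.val : ℕ) : ZMod (p ^ (k + 1))).val = u.val + p ^ k * a.val :=
    fun u a => ZMod.val_natCast_of_lt (hlt2 u a)
  have hdivlt : ∀ x : ZMod (p ^ (k + 1)), x.val / p < p ^ k := by
    intro x
    apply Nat.div_lt_of_lt_mul
    calc x.val < p ^ (k + 1) := x.val_lt
      _ = p * p ^ k := by ring
  have hdivlt2 : ∀ x : ZMod (p ^ (k + 1)), x.val / p ^ k < p := by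
    intro x
    apply Nat.div_lt_of_lt_mul
    calc x.val < p ^ (k + 1) := x.val_lt
      _ = p ^ k * p := by ring
  have hcard : ((univ : Finset (ZMod p × ZMod p)) ×ˢ sols (p ^ k) m₀).card
      = p ^ 2 * (sols (p ^ k) m₀).card := by
    rw [Finset.card_product, Finset.card_univ, Fintype.card_prod, ZMod.card, sq]
  rw [← hcard]
  apply Finset.card_nbij'
    (fun v => (((((v.2.1.val / p ^ k : ℕ) : ZMod p), ((v.2.2.2.val / p ^ k : ℕ) : ZMod p)) :
        ZMod p × ZMod p),
      (((v.1.val / p : ℕ) : ZMod (p ^ k)), ((v.2.1.val : ℕ) : ZMod (p ^ k)),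
       ((v.2.2.1.val / p : ℕ) : ZMod (p ^ k)), ((v.2.2.2.val : ℕ) : ZMod (p ^ k)))))
    (fun b => (((p * b.2.1.val : ℕ) : ZMod (p ^ (k + 1))),
      ((b.2.2.1.val + p ^ k * b.1.1.val : ℕ) : ZMod (p ^ (k + 1))),
      ((p * b.2.2.2.1.val : ℕ) : ZMod (p ^ (k + 1))),
      ((b.2.2.2.2.val + p ^ k * b.1.2.val : ℕ) : ZMod (p ^ (k + 1)))))
  -- hi : forward membership
  · intro v hv
    simp only [Finset.mem_coe, mem_filter, sols, mem_univ, true_and] at hv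
    obtain ⟨heq, hx, hz⟩ := hv
    rw [Finset.mem_coe, Finset.mem_product]
    refine ⟨Finset.mem_univ _, ?_⟩
    simp only [sols, mem_filter, mem_univ, true_and]
    set q1 := v.1.val / p with hq1
    set q2 := v.2.2.1.val / p with hq2
    have e1 : v.1.val = p * q1 := (Nat.mul_div_cancel' hx).symm
    have e2 : v.2.2.1.val = p * q2 := (Nat.mul_div_cancel' hz).symm
    have h : (((q1 * v.2.1.val + q2 * v.2.2.2.val : ℕ) : ℤ) : ZMod (p ^ k))
        = (m₀ : ZMod (p ^ k)) := by
      apply unlift_eq k hp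
      push_cast at heq ⊢
      rw [← heq]
      conv_rhs => rw [← ZMod.natCast_rightInverse v.1, ← ZMod.natCast_rightInverse v.2.1,
        ← ZMod.natCast_rightInverse v.2.2.1, ← ZMod.natCast_rightInverse v.2.2.2, e1, e2]
      push_cast
      ring
    push_cast at h ⊢
    linear_combination h
  -- hj : backward membership
  · intro b hb
    rw [Finset.mem_coe, Finset.mem_product] at hb
    obtain ⟨-, hb⟩ := hb
    simp only [sols, mem_filter, mem_univ, true_and] at hb
    simp only [Finset.mem_coe, mem_filter, sols, mem_univ, true_and]
    refine ⟨?_, ?_, ?_⟩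
    · -- the equation
      have hsmall : (((b.2.1.val * b.2.2.1.val + b.2.2.2.1.val * b.2.2.2.2.val : ℕ) : ℤ) :
          ZMod (p ^ k)) = (m₀ : ZMod (p ^ k)) := by
        push_cast
        rw [ZMod.natCast_rightInverse b.2.1, ZMod.natCast_rightInverse b.2.2.1,
          ZMod.natCast_rightInverse b.2.2.2.1, ZMod.natCast_rightInverse b.2.2.2.2]
        exact hb
      have hlift := lift_eq k hsmall
      have hz0 : ((p : ZMod (p ^ (k + 1))))^(k+1) = 0 := by
        rw [← Nat.cast_pow, ZMod.natCast_self]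
      push_cast at hlift ⊢
      linear_combination hlift + ((b.2.1.val : ZMod (p ^ (k + 1))) * (b.1.1.val : ZMod (p ^ (k+1)))
        + (b.2.2.2.1.val : ZMod (p ^ (k+1))) * (b.1.2.val : ZMod (p ^ (k+1)))) * hz0
    · rw [hval1]
      exact dvd_mul_right _ _
    · rw [hval1]
      exact dvd_mul_right _ _
  -- left inverse
  · intro v hv
    simp only [Finset.mem_coe, mem_filter, sols, mem_univ, true_and] at hv
    obtain ⟨-, hx, hz⟩ := hv
    have c1 : (((p * (((v.1.val / p : ℕ) : ZMod (p ^ k))).val : ℕ)) : ZMod (p ^ (k + 1))) = v.1 := by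
      rw [ZMod.val_natCast_of_lt (hdivlt v.1), Nat.mul_div_cancel' hx]
      exact ZMod.natCast_rightInverse v.1
    have c2 : ((((v.2.1.val : ℕ) : ZMod (p ^ k)).val
        + p ^ k * (((v.2.1.val / p ^ k : ℕ) : ZMod p)).val : ℕ) : ZMod (p ^ (k + 1))) = v.2.1 := by
      rw [ZMod.val_natCast, ZMod.val_natCast_of_lt (hdivlt2 v.2.1), Nat.mod_add_div]
      exact ZMod.natCast_rightInverse v.2.1
    have c3 : (((p * (((v.2.2.1.val / p : ℕ) : ZMod (p ^ k))).val : ℕ)) : ZMod (p ^ (k + 1))) = v.2.2.1 := by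
      rw [ZMod.val_natCast_of_lt (hdivlt v.2.2.1), Nat.mul_div_cancel' hz]
      exact ZMod.natCast_rightInverse v.2.2.1
    have c4 : ((((v.2.2.2.val : ℕ) : ZMod (p ^ k)).val
        + p ^ k * (((v.2.2.2.val / p ^ k : ℕ) : ZMod p)).val : ℕ) : ZMod (p ^ (k + 1))) = v.2.2.2 := by
      rw [ZMod.val_natCast, ZMod.val_natCast_of_lt (hdivlt2 v.2.2.2), Nat.mod_add_div]
      exact ZMod.natCast_rightInverse v.2.2.2
    exact Prod.ext c1 (Prod.ext c2 (Prod.ext c3 c4))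
  -- right inverse
  · intro b hb
    have d1 : ((((((b.2.2.1.val + p ^ k * b.1.1.val : ℕ) : ZMod (p ^ (k + 1)))).val / p ^ k : ℕ))
        : ZMod p) = b.1.1 := by
      rw [hval2, Nat.add_mul_div_left _ _ (pow_pos hp.pos k), Nat.div_eq_of_lt b.2.2.1.val_lt,
        zero_add]
      exact ZMod.natCast_rightInverse b.1.1
    have d2 : ((((((b.2.2.2.2.val + p ^ k * b.1.2.val : ℕ) : ZMod (p ^ (k + 1)))).val / p ^ k : ℕ))
        : ZMod p) = b.1.2 := by
      rw [hval2, Nat.add_mul_div_left _ _ (pow_pos hp.pos k), Nat.div_eq_of_lt b.2.2.2.2.val_lt,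
        zero_add]
      exact ZMod.natCast_rightInverse b.1.2
    have d3 : (((((p * b.2.1.val : ℕ) : ZMod (p ^ (k + 1)))).val / p : ℕ)
        : ZMod (p ^ k)) = b.2.1 := by
      rw [hval1, Nat.mul_div_cancel_left _ hp.pos]
      exact ZMod.natCast_rightInverse b.2.1
    have d4 : (((((b.2.2.1.val + p ^ k * b.1.1.val : ℕ) : ZMod (p ^ (k + 1)))).val : ℕ)
        : ZMod (p ^ k)) = b.2.2.1 := by
      rw [hval2, Nat.cast_add, Nat.cast_mul, ZMod.natCast_self, zero_mul, add_zero]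
      exact ZMod.natCast_rightInverse b.2.2.1
    have d5 : (((((p * b.2.2.2.1.val : ℕ) : ZMod (p ^ (k + 1)))).val / p : ℕ)
        : ZMod (p ^ k)) = b.2.2.2.1 := by
      rw [hval1, Nat.mul_div_cancel_left _ hp.pos]
      exact ZMod.natCast_rightInverse b.2.2.2.1
    have d6 : (((((b.2.2.2.2.val + p ^ k * b.1.2.val : ℕ) : ZMod (p ^ (k + 1)))).val : ℕ)
        : ZMod (p ^ k)) = b.2.2.2.2 := by
      rw [hval2, Nat.cast_add, Nat.cast_mul, ZMod.natCast_self, zero_mul, add_zero]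
      exact ZMod.natCast_rightInverse b.2.2.2.2
    exact Prod.ext (Prod.ext d1 d2) (Prod.ext d3 (Prod.ext d4 (Prod.ext d5 d6)))

end RepNumAux

namespace RepNumAux
open Finset

lemma sols_succ {p : ℕ} (hp : p.Prime) (k : ℕ) (m : ℤ) :
    letI : NeZero (p ^ (k + 1)) := ⟨pow_ne_zero _ hp.ne_zero⟩
    letI : NeZero (p ^ k) := ⟨pow_ne_zero _ hp.ne_zero⟩
    (sols (p ^ (k + 1)) m).card
      = (p ^ (2 * (k + 1)) - p ^ (2 * k)) * p ^ (k + 1)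
        + (if (p : ℤ) ∣ m then p ^ 2 * (sols (p ^ k) (m / p)).card else 0) := by
  haveI : NeZero (p ^ (k + 1)) := ⟨pow_ne_zero _ hp.ne_zero⟩
  haveI : NeZero (p ^ k) := ⟨pow_ne_zero _ hp.ne_zero⟩
  classical
  have hsplit : ((sols (p ^ (k + 1)) m).filter (fun v => p ∣ v.1.val ∧ p ∣ v.2.2.1.val)).card
      + ((sols (p ^ (k + 1)) m).filter (fun v => ¬(p ∣ v.1.val ∧ p ∣ v.2.2.1.val))).card
      = (sols (p ^ (k + 1)) m).card :=
    Finset.card_filter_add_card_filter_not _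
  rw [← hsplit]
  by_cases hd : (p : ℤ) ∣ m
  · rw [if_pos hd]
    have hm : m = (p : ℤ) * (m / p) := (Int.mul_ediv_cancel' hd).symm
    have h1 : ((sols (p ^ (k + 1)) m).filter (fun v => p ∣ v.1.val ∧ p ∣ v.2.2.1.val)).card
        = p ^ 2 * (sols (p ^ k) (m / p)).card := by
      conv_lhs => rw [hm]
      exact card_nonunit_part hp k (m / p)
    have h2 := card_unit_part hp k m
    omega
  · rw [if_neg hd]
    have h1 : ((sols (p ^ (k + 1)) m).filter (fun v => p ∣ v.1.val ∧ p ∣ v.2.2.1.val)).card = 0 := by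
      rw [nonunit_empty hp k m hd, Finset.card_empty]
    have h2 := card_unit_part hp k m
    omega

end RepNumAux

namespace RepNumAux
open Finset

lemma zpow_neg_nat (x : ℚ) (n : ℕ) : x ^ (-(n : ℤ) - 1) = (x ^ (n + 1))⁻¹ := by
  rw [show (-(n : ℤ) - 1) = -(((n + 1 : ℕ) : ℤ)) by push_cast; ring, zpow_neg, zpow_natCast]

lemma sols_one' (n : ℕ) [NeZero n] (hn : n = 1) (m : ℤ) : (sols n m).card = 1 := by
  subst hn
  exact sols_one m

lemma main {p : ℕ} (hp : p.Prime) : ∀ (k : ℕ) (m : ℤ),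
    letI : NeZero (p ^ k) := ⟨pow_ne_zero _ hp.ne_zero⟩
    ((sols (p ^ k) m).card : ℚ)
      = if m ≠ 0 ∧ padicValInt p m < k then
          (p : ℚ) ^ (3 * k) * (1 + (p : ℚ)⁻¹) * (1 - (p : ℚ) ^ (-(padicValInt p m : ℤ) - 1))
        else (p : ℚ) ^ (3 * k) * (1 + (p : ℚ)⁻¹ - (p : ℚ) ^ (-(k : ℤ) - 1)) := by
  haveI : Fact p.Prime := ⟨hp⟩
  have hp0 : (p : ℚ) ≠ 0 := Nat.cast_ne_zero.mpr hp.ne_zero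
  intro k
  induction k with
  | zero =>
    intro m
    rw [if_neg (by omega), sols_one' (p ^ 0) (pow_zero p) m, zpow_neg_nat]
    norm_num
  | succ k ih =>
    intro m
    haveI : NeZero (p ^ (k + 1)) := ⟨pow_ne_zero _ hp.ne_zero⟩
    haveI : NeZero (p ^ k) := ⟨pow_ne_zero _ hp.ne_zero⟩
    have hle : p ^ (2 * k) ≤ p ^ (2 * (k + 1)) := Nat.pow_le_pow_right hp.pos (by omega)
    have hpz : (p : ℤ) ≠ 0 := Int.natCast_ne_zero.mpr hp.ne_zero
    rw [sols_succ hp k m]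
    by_cases hd : (p : ℤ) ∣ m
    · obtain ⟨m₀, rfl⟩ := hd
      rw [if_pos (Dvd.intro m₀ rfl), Int.mul_ediv_cancel_left m₀ hpz]
      push_cast [Nat.cast_sub hle]
      rw [ih m₀]
      by_cases hm₀ : m₀ = 0
      · subst hm₀
        rw [if_neg (by simp), if_neg (by simp)]
        rw [zpow_neg_nat,
          show ((p : ℚ) ^ (-((k : ℤ) + 1) - 1)) = ((p : ℚ) ^ (k + 1 + 1))⁻¹ by
            rw [show (-((k : ℤ) + 1) - 1) = -(((k + 1 : ℕ)) : ℤ) - 1 by push_cast; ring,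
              zpow_neg_nat]]
        field_simp
        ring
      · have hmne : (p : ℤ) * m₀ ≠ 0 := mul_ne_zero hpz hm₀
        have hval : padicValInt p ((p : ℤ) * m₀) = padicValInt p m₀ + 1 := by
          rw [padicValInt.mul (by exact_mod_cast hpz) hm₀, padicValInt.self hp.one_lt]
          omega
        by_cases hv : padicValInt p m₀ < k
        · rw [if_pos ⟨hm₀, hv⟩, if_pos ⟨hmne, by omega⟩, hval]
          rw [zpow_neg_nat, zpow_neg_nat]
          field_simp
          ring
        · rw [if_neg (by tauto), if_neg (by rw [hval]; omega)]
          rw [zpow_neg_nat,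
            show ((p : ℚ) ^ (-((k : ℤ) + 1) - 1)) = ((p : ℚ) ^ (k + 1 + 1))⁻¹ by
              rw [show (-((k : ℤ) + 1) - 1) = -(((k + 1 : ℕ)) : ℤ) - 1 by push_cast; ring,
                zpow_neg_nat]]
          field_simp
          ring
    · rw [if_neg hd]
      have hm0 : m ≠ 0 := by rintro rfl; exact hd (dvd_zero _)
      have hv : padicValInt p m = 0 := padicValInt.eq_zero_of_not_dvd hd
      rw [if_pos ⟨hm0, by omega⟩, hv]
      push_cast [Nat.cast_sub hle]
      rw [show ((-1 : ℤ)) = -((0:ℕ) : ℤ) - 1 by norm_num, zpow_neg_nat]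
      field_simp
      ring

end RepNumAux


/-- Representation numbers of `U ⊕ U = (ℤ⁴, Q = x₁y₁ + x₂y₂)` modulo `p^ν`:
if `m ≠ 0` and `v_p(m) < ν` then `N^{U⊕U}_{m,0}(p^ν) = p^{3ν}(1+p⁻¹)(1-p^{-v_p(m)-1})`, and
if `m = 0` or `v_p(m) ≥ ν` then `N^{U⊕U}_{m,0}(p^ν) = p^{3ν}(1+p⁻¹-p^{-ν-1})`. -/
theorem repNumber_two_hyperbolic_planes (p : ℕ) (hp : p.Prime) (ν : ℕ) (m : ℤ) :
    (if m ≠ 0 ∧ padicValInt p m < ν then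
      (Nat.card {v : ZMod (p ^ ν) × ZMod (p ^ ν) × ZMod (p ^ ν) × ZMod (p ^ ν) //
          v.1 * v.2.1 + v.2.2.1 * v.2.2.2 = (m : ZMod (p ^ ν))} : ℚ)
        = (p : ℚ) ^ (3 * ν) * (1 + (p : ℚ)⁻¹) * (1 - (p : ℚ) ^ (-(padicValInt p m : ℤ) - 1))
    else
      (Nat.card {v : ZMod (p ^ ν) × ZMod (p ^ ν) × ZMod (p ^ ν) × ZMod (p ^ ν) //
          v.1 * v.2.1 + v.2.2.1 * v.2.2.2 = (m : ZMod (p ^ ν))} : ℚ)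
        = (p : ℚ) ^ (3 * ν) * (1 + (p : ℚ)⁻¹ - (p : ℚ) ^ (-(ν : ℤ) - 1))) := by
  haveI : NeZero (p ^ ν) := ⟨pow_ne_zero _ hp.ne_zero⟩
  have hN : (Nat.card {v : ZMod (p ^ ν) × ZMod (p ^ ν) × ZMod (p ^ ν) × ZMod (p ^ ν) //
      v.1 * v.2.1 + v.2.2.1 * v.2.2.2 = (m : ZMod (p ^ ν))} : ℚ)
      = ((RepNumAux.sols (p ^ ν) m).card : ℚ) := by
    rw [RepNumAux.natCard_eq_sols]
  have h := RepNumAux.main hp ν m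
  split_ifs with hc
  · rw [hN, h, if_pos hc]
  · rw [hN, h, if_neg hc]
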